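/- Suppose f is twice continuously differentiable on ℝ^{n×p}. Then for every X ∈ ℝ^{n×p}, the gradient ∇h is differentiable at X and its derivative Hh(X) (the Hessian of h) is given by Hh(X)[D] = J_X( Hf(X·A(X))[ J_X(D) ] ) − D·Φ(Xᵀ·G(X)) − X·Φ(Dᵀ·G(X)) − G(X)·Φ(Dᵀ·X) + β·( 2·X·Φ(Xᵀ·D) + D·(XᵀX − I_p) ) for all D ∈ ℝ^{n×p}, where J_X(D) := D·A(X) − X·Φ(DᵀX). -/

import Mathlib

open Matrix

attribute [local instance] Matrix.frobeniusNormedAddCommGroup Matrix.frobeniusNormedSpace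

namespace ExPen

noncomputable def finner {n p : ℕ} (A B : Matrix (Fin n) (Fin p) ℝ) : ℝ := (Aᵀ * B).trace

noncomputable def Phi {p : ℕ} (M : Matrix (Fin p) (Fin p) ℝ) : Matrix (Fin p) (Fin p) ℝ :=
  (1 / 2 : ℝ) • (M + Mᵀ)

noncomputable def Amap {n p : ℕ} (X : Matrix (Fin n) (Fin p) ℝ) : Matrix (Fin p) (Fin p) ℝ :=
  (3 / 2 : ℝ) • (1 : Matrix (Fin p) (Fin p) ℝ) - (1 / 2 : ℝ) • (Xᵀ * X)

noncomputable def g {n p : ℕ} (f : Matrix (Fin n) (Fin p) ℝ → ℝ)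
    (X : Matrix (Fin n) (Fin p) ℝ) : ℝ := f (X * Amap X)

noncomputable def hpen {n p : ℕ} (f : Matrix (Fin n) (Fin p) ℝ → ℝ) (β : ℝ)
    (X : Matrix (Fin n) (Fin p) ℝ) : ℝ := g f X + β / 4 * ‖Xᵀ * X - 1‖ ^ 2

noncomputable def dualCLM {n p : ℕ} (G : Matrix (Fin n) (Fin p) ℝ) :
    Matrix (Fin n) (Fin p) ℝ →L[ℝ] ℝ :=
  LinearMap.toContinuousLinearMap
    { toFun := fun D => (Gᵀ * D).trace
      map_add' := by intro D E; simp [Matrix.mul_add]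
      map_smul' := by intro c D; simp [Matrix.mul_smul] }

def HasGradAt {n p : ℕ} (φ : Matrix (Fin n) (Fin p) ℝ → ℝ)
    (X G : Matrix (Fin n) (Fin p) ℝ) : Prop :=
  HasFDerivAt φ (dualCLM G) X

noncomputable def specNorm {n p : ℕ} (X : Matrix (Fin n) (Fin p) ℝ) : ℝ :=
  ‖LinearMap.toContinuousLinearMap
    (Matrix.toEuclideanLin X : EuclideanSpace ℝ (Fin p) →ₗ[ℝ] EuclideanSpace ℝ (Fin n))‖

lemma posSemidef_tmul {n p : ℕ} (X : Matrix (Fin n) (Fin p) ℝ) : (Xᵀ * X).PosSemidef := by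
  simpa [Matrix.conjTranspose_eq_transpose_of_trivial] using
    Matrix.posSemidef_conjTranspose_mul_self X

noncomputable def PosSemidef.sqrt {m : Type*} [Fintype m] [DecidableEq m]
    {A : Matrix m m ℝ} (hA : A.PosSemidef) : Matrix m m ℝ :=
  hA.1.eigenvectorUnitary.1 * diagonal ((↑) ∘ (hA.1.eigenvalues · |>.sqrt)) *
    (star hA.1.eigenvectorUnitary : Matrix m m ℝ)

noncomputable def Pst {n p : ℕ} (X : Matrix (Fin n) (Fin p) ℝ) : Matrix (Fin n) (Fin p) ℝ :=
  X * (PosSemidef.sqrt (posSemidef_tmul X) : Matrix (Fin p) (Fin p) ℝ)⁻¹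



/- ===== auxiliary infrastructure ===== -/

lemma ibbm_mul {a b c : ℕ} :
    IsBoundedBilinearMap ℝ
      (fun q : Matrix (Fin a) (Fin b) ℝ × Matrix (Fin b) (Fin c) ℝ => q.1 * q.2) where
  add_left x₁ x₂ y := Matrix.add_mul x₁ x₂ y
  smul_left c x y := Matrix.smul_mul c x y
  add_right x y₁ y₂ := Matrix.mul_add x y₁ y₂
  smul_right c x y := Matrix.mul_smul x c y
  bound := ⟨1, one_pos, fun x y => by simpa using Matrix.frobenius_norm_mul x y⟩

noncomputable def transposeCLM (a b : ℕ) :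
    Matrix (Fin a) (Fin b) ℝ →L[ℝ] Matrix (Fin b) (Fin a) ℝ :=
  LinearMap.toContinuousLinearMap (Matrix.transposeLinearEquiv (Fin a) (Fin b) ℝ ℝ).toLinearMap

@[simp] lemma transposeCLM_apply {a b : ℕ} (M : Matrix (Fin a) (Fin b) ℝ) :
    transposeCLM a b M = Mᵀ := rfl

noncomputable def traceCLM (a : ℕ) : Matrix (Fin a) (Fin a) ℝ →L[ℝ] ℝ :=
  LinearMap.toContinuousLinearMap (Matrix.traceLinearMap (Fin a) ℝ ℝ)

@[simp] lemma traceCLM_apply {a : ℕ} (M : Matrix (Fin a) (Fin a) ℝ) :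
    traceCLM a M = M.trace := rfl

noncomputable def mulL {a b c : ℕ} (M : Matrix (Fin a) (Fin b) ℝ) :
    Matrix (Fin b) (Fin c) ℝ →L[ℝ] Matrix (Fin a) (Fin c) ℝ :=
  LinearMap.toContinuousLinearMap
    { toFun := fun N => M * N
      map_add' := Matrix.mul_add M
      map_smul' := by intro r N; simp [Matrix.mul_smul] }

@[simp] lemma mulL_apply {a b c : ℕ} (M : Matrix (Fin a) (Fin b) ℝ)
    (N : Matrix (Fin b) (Fin c) ℝ) : mulL M N = M * N := rfl

noncomputable def mulR {a b c : ℕ} (N : Matrix (Fin b) (Fin c) ℝ) :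
    Matrix (Fin a) (Fin b) ℝ →L[ℝ] Matrix (Fin a) (Fin c) ℝ :=
  LinearMap.toContinuousLinearMap
    { toFun := fun M => M * N
      map_add' := fun M M' => Matrix.add_mul M M' N
      map_smul' := by intro r M; simp [Matrix.smul_mul] }

@[simp] lemma mulR_apply {a b c : ℕ} (N : Matrix (Fin b) (Fin c) ℝ)
    (M : Matrix (Fin a) (Fin b) ℝ) : mulR N M = M * N := rfl

lemma HasFDerivAt.matmul {E : Type*} [NormedAddCommGroup E] [NormedSpace ℝ E]
    {a b c : ℕ} {u : E → Matrix (Fin a) (Fin b) ℝ} {v : E → Matrix (Fin b) (Fin c) ℝ}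
    {u' : E →L[ℝ] Matrix (Fin a) (Fin b) ℝ} {v' : E →L[ℝ] Matrix (Fin b) (Fin c) ℝ} {x : E}
    (hu : HasFDerivAt u u' x) (hv : HasFDerivAt v v' x) :
    HasFDerivAt (fun y => u y * v y) (mulL (u x) ∘L v' + mulR (v x) ∘L u') x := by
  have h := (ibbm_mul.hasFDerivAt (u x, v x)).comp x (hu.prodMk hv)
  convert h using 1 <;> rfl

lemma sq_norm_eq {a b : ℕ} (M : Matrix (Fin a) (Fin b) ℝ) : ‖M‖ ^ 2 = (Mᵀ * M).trace := by
  have h1 : ((Mᵀ * M).trace) = ∑ i, ∑ j, ‖M i j‖ ^ (2:ℝ) := by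
    rw [Matrix.trace]
    simp only [Matrix.diag, Matrix.mul_apply, Matrix.transpose_apply]
    rw [Finset.sum_comm]
    congr 1 with i
    congr 1 with j
    rw [Real.rpow_two, Real.norm_eq_abs, ← sq_abs, sq, abs_abs]
    exact (abs_mul_abs_self _).symm
  rw [Matrix.frobenius_norm_def, ← Real.rpow_natCast _ 2, ← Real.rpow_mul (by positivity), h1]
  norm_num

noncomputable def phiCLM (a : ℕ) : Matrix (Fin a) (Fin a) ℝ →L[ℝ] Matrix (Fin a) (Fin a) ℝ :=
  LinearMap.toContinuousLinearMap
    { toFun := Phi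
      map_add' := by intro A B; simp [Phi, Matrix.transpose_add]; module
      map_smul' := by intro c A; simp [Phi, Matrix.transpose_smul, smul_add]; module }

@[simp] lemma phiCLM_apply {a : ℕ} (M : Matrix (Fin a) (Fin a) ℝ) : phiCLM a M = Phi M := rfl

lemma tr_tmul_comm {a b : ℕ} (M N : Matrix (Fin a) (Fin b) ℝ) :
    (Mᵀ * N).trace = (Nᵀ * M).trace := by
  rw [← Matrix.trace_transpose, Matrix.transpose_mul, Matrix.transpose_transpose]

lemma tr_adj_mulR {a b c : ℕ} (M : Matrix (Fin a) (Fin b) ℝ) (N : Matrix (Fin b) (Fin c) ℝ)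
    (D : Matrix (Fin a) (Fin c) ℝ) : ((M * N)ᵀ * D).trace = (Mᵀ * (D * Nᵀ)).trace := by
  rw [Matrix.transpose_mul, Matrix.mul_assoc, ← Matrix.mul_assoc Mᵀ D Nᵀ,
    Matrix.trace_mul_comm Nᵀ (Mᵀ * D), Matrix.mul_assoc]

lemma tr_adj_mulL {a b c : ℕ} (M : Matrix (Fin a) (Fin b) ℝ) (N : Matrix (Fin b) (Fin c) ℝ)
    (D : Matrix (Fin a) (Fin c) ℝ) : ((M * N)ᵀ * D).trace = (Nᵀ * (Mᵀ * D)).trace := by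
  rw [Matrix.transpose_mul, Matrix.mul_assoc]

@[simp] lemma dualCLM_apply {n p : ℕ} (G D : Matrix (Fin n) (Fin p) ℝ) :
    dualCLM G D = (Gᵀ * D).trace := rfl

lemma Amap_transpose {n p : ℕ} (X : Matrix (Fin n) (Fin p) ℝ) : (Amap X)ᵀ = Amap X := by
  simp [Amap, Matrix.transpose_sub, Matrix.transpose_smul, Matrix.transpose_mul]

/-- the derivative of `X ↦ Xᵀ * X` -/
noncomputable def tmulD {n p : ℕ} (X : Matrix (Fin n) (Fin p) ℝ) :
    Matrix (Fin n) (Fin p) ℝ →L[ℝ] Matrix (Fin p) (Fin p) ℝ :=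
  mulR X ∘L transposeCLM n p + mulL Xᵀ

@[simp] lemma tmulD_apply {n p : ℕ} (X D : Matrix (Fin n) (Fin p) ℝ) :
    tmulD X D = Dᵀ * X + Xᵀ * D := rfl

lemma hasFDerivAt_tmul {n p : ℕ} (X : Matrix (Fin n) (Fin p) ℝ) :
    HasFDerivAt (fun Y : Matrix (Fin n) (Fin p) ℝ => Yᵀ * Y) (tmulD X) X := by
  have h := HasFDerivAt.matmul (u := fun Y : Matrix (Fin n) (Fin p) ℝ => Yᵀ)
    (v := fun Y => Y) ((transposeCLM n p).hasFDerivAt) (hasFDerivAt_id X)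
  refine h.congr_fderiv ?_
  ext1 D
  show Xᵀ * D + Dᵀ * X = Dᵀ * X + Xᵀ * D
  abel

lemma hasFDerivAt_Amap {n p : ℕ} (X : Matrix (Fin n) (Fin p) ℝ) :
    HasFDerivAt (Amap (n := n) (p := p)) (-(1 / 2 : ℝ) • tmulD X) X := by
  have h := ((hasFDerivAt_const ((3 / 2 : ℝ) • (1 : Matrix (Fin p) (Fin p) ℝ)) X).sub
    (((hasFDerivAt_tmul X).const_smul (1 / 2 : ℝ))))
  refine (h.congr_fderiv ?_)
  ext1 D
  show (0 : Matrix (Fin p) (Fin p) ℝ) - (1 / 2 : ℝ) • (Dᵀ * X + Xᵀ * D)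
    = -(1 / 2 : ℝ) • (Dᵀ * X + Xᵀ * D)
  module

/-- the derivative of `X ↦ X * Amap X` -/
noncomputable def Jc {n p : ℕ} (X : Matrix (Fin n) (Fin p) ℝ) :
    Matrix (Fin n) (Fin p) ℝ →L[ℝ] Matrix (Fin n) (Fin p) ℝ :=
  mulR (Amap X) + mulL X ∘L (-(1 / 2 : ℝ) • tmulD X)

lemma Jc_apply {n p : ℕ} (X D : Matrix (Fin n) (Fin p) ℝ) :
    Jc X D = D * Amap X - X * Phi (Dᵀ * X) := by
  simp [Jc, Phi, Matrix.transpose_mul, Matrix.mul_add, Matrix.mul_smul, smul_smul]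
  module

lemma hasFDerivAt_XAmap {n p : ℕ} (X : Matrix (Fin n) (Fin p) ℝ) :
    HasFDerivAt (fun Y : Matrix (Fin n) (Fin p) ℝ => Y * Amap Y) (Jc X) X := by
  have h := HasFDerivAt.matmul (u := fun Y : Matrix (Fin n) (Fin p) ℝ => Y)
    (v := Amap) (hasFDerivAt_id X) (hasFDerivAt_Amap X)
  refine h.congr_fderiv ?_
  ext1 D
  show X * (-(1 / 2 : ℝ) • (Dᵀ * X + Xᵀ * D)) + D * Amap X
    = D * Amap X + X * (-(1 / 2 : ℝ) • (Dᵀ * X + Xᵀ * D))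
  abel


lemma hasGradAt_g {n p : ℕ} (f : Matrix (Fin n) (Fin p) ℝ → ℝ)
    (gradf : Matrix (Fin n) (Fin p) ℝ → Matrix (Fin n) (Fin p) ℝ)
    (hgradf : ∀ Y, HasGradAt f Y (gradf Y)) (X : Matrix (Fin n) (Fin p) ℝ) :
    HasGradAt (g f) X
      (gradf (X * Amap X) * Amap X - X * Phi (Xᵀ * gradf (X * Amap X))) := by
  set G := gradf (X * Amap X) with hG
  have hf' : HasFDerivAt f (dualCLM G) (X * Amap X) := hgradf _
  have h : HasFDerivAt (g f) (dualCLM G ∘L Jc X) X :=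
    hf'.comp X (hasFDerivAt_XAmap X)
  refine h.congr_fderiv ?_
  ext D
  have h1 : (Gᵀ * (D * Amap X)).trace = (Amap X * (Gᵀ * D)).trace := by
    rw [← Matrix.mul_assoc, Matrix.trace_mul_comm]
  have h2 : (Gᵀ * (X * (Dᵀ * X))).trace = (Xᵀ * (G * (Xᵀ * D))).trace := by
    rw [tr_tmul_comm, tr_adj_mulL, Matrix.transpose_mul, Matrix.transpose_transpose,
      Matrix.trace_mul_comm, Matrix.mul_assoc]
  simp only [ContinuousLinearMap.comp_apply, dualCLM_apply, Jc_apply, Phi,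
    Matrix.transpose_sub, Matrix.transpose_add, Matrix.transpose_mul, Matrix.transpose_smul,
    Matrix.transpose_transpose, Amap_transpose, Matrix.mul_sub, Matrix.sub_mul,
    Matrix.mul_add, Matrix.add_mul, Matrix.smul_mul, Matrix.mul_smul,
    Matrix.trace_sub, Matrix.trace_add, Matrix.trace_smul, smul_eq_mul, Matrix.mul_assoc]
  linear_combination h1 - (1/2) * h2


lemma hasGradAt_pen {n p : ℕ} (β : ℝ) (X : Matrix (Fin n) (Fin p) ℝ) :
    HasFDerivAt (fun Y : Matrix (Fin n) (Fin p) ℝ => β / 4 * ‖Yᵀ * Y - 1‖ ^ 2)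
      (dualCLM (β • (X * (Xᵀ * X - 1)))) X := by
  have hfun : (fun Y : Matrix (Fin n) (Fin p) ℝ => β / 4 * ‖Yᵀ * Y - 1‖ ^ 2)
      = fun Y => β / 4 * ((Yᵀ * Y - 1)ᵀ * (Yᵀ * Y - 1)).trace := by
    funext Y; rw [sq_norm_eq]
  rw [hfun]
  have hr : HasFDerivAt (fun Y : Matrix (Fin n) (Fin p) ℝ => Yᵀ * Y - 1) (tmulD X) X :=
    (hasFDerivAt_tmul X).sub_const 1
  have hrt : HasFDerivAt (fun Y : Matrix (Fin n) (Fin p) ℝ => (Yᵀ * Y - 1)ᵀ)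
      (transposeCLM p p ∘L tmulD X) X := ((transposeCLM p p).hasFDerivAt).comp X hr
  have hq := HasFDerivAt.matmul hrt hr
  have htr := ((traceCLM p).hasFDerivAt).comp X hq
  have h := htr.const_mul (β / 4)
  refine h.congr_fderiv ?_
  ext D
  have hRt : (Xᵀ * X - (1 : Matrix (Fin p) (Fin p) ℝ))ᵀ = Xᵀ * X - 1 := by
    simp [Matrix.transpose_sub, Matrix.transpose_mul]
  have key : ((Xᵀ * X - 1) * (Dᵀ * X)).trace = ((Xᵀ * X - 1) * (Xᵀ * D)).trace := by
    conv_lhs => rw [← Matrix.trace_transpose]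
    rw [Matrix.transpose_mul, Matrix.transpose_mul, Matrix.transpose_transpose, hRt,
      Matrix.trace_mul_comm]
  have key2 : ((X * (Xᵀ * X - 1))ᵀ * D).trace = ((Xᵀ * X - 1) * (Xᵀ * D)).trace := by
    rw [tr_adj_mulL, hRt]
  show (β / 4) • ((Xᵀ * X - 1)ᵀ * (Dᵀ * X + Xᵀ * D) + (Dᵀ * X + Xᵀ * D)ᵀ * (Xᵀ * X - 1)).trace
    = ((β • (X * (Xᵀ * X - 1)))ᵀ * D).trace
  simp only [ContinuousLinearMap.coe_smul', Pi.smul_apply, ContinuousLinearMap.comp_apply,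
    ContinuousLinearMap.add_apply, traceCLM_apply, transposeCLM_apply, tmulD_apply,
    mulL_apply, mulR_apply, dualCLM_apply, Matrix.transpose_smul, Matrix.transpose_add, hRt,
    Matrix.transpose_mul, Matrix.transpose_transpose,
    Matrix.smul_mul, Matrix.mul_add, Matrix.add_mul, Matrix.trace_add, Matrix.trace_smul,
    smul_eq_mul]
  have k3 : (Xᵀ * D * (Xᵀ * X - 1)).trace = ((Xᵀ * X - 1) * Xᵀ * D).trace := by
    rw [Matrix.trace_mul_comm, ← Matrix.mul_assoc]
  have k4 : (Dᵀ * X * (Xᵀ * X - 1)).trace = ((Xᵀ * X - 1) * Xᵀ * D).trace := by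
    rw [← Matrix.trace_transpose, Matrix.transpose_mul, Matrix.transpose_mul,
      Matrix.transpose_transpose, hRt, ← Matrix.mul_assoc]
  have k5 : ((X * (Xᵀ * X - 1))ᵀ * D).trace = ((Xᵀ * X - 1) * Xᵀ * D).trace := by
    rw [Matrix.transpose_mul, hRt]
  linear_combination (β / 4) * key - (β / 2) * key2 + (β / 4) * k3 + (β / 4) * k4 + (β / 2) * k5


lemma dualCLM_add {n p : ℕ} (G₁ G₂ : Matrix (Fin n) (Fin p) ℝ) :
    dualCLM (G₁ + G₂) = dualCLM G₁ + dualCLM G₂ := by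
  ext D
  simp [Matrix.transpose_add, Matrix.add_mul, Matrix.trace_add]

lemma hasGradAt_hpen {n p : ℕ} (f : Matrix (Fin n) (Fin p) ℝ → ℝ) (β : ℝ)
    (gradf : Matrix (Fin n) (Fin p) ℝ → Matrix (Fin n) (Fin p) ℝ)
    (hgradf : ∀ Y, HasGradAt f Y (gradf Y)) (X : Matrix (Fin n) (Fin p) ℝ) :
    HasGradAt (hpen f β) X
      (gradf (X * Amap X) * Amap X - X * Phi (Xᵀ * gradf (X * Amap X))
        + β • (X * (Xᵀ * X - 1))) := by
  have h := HasFDerivAt.add (hasGradAt_g f gradf hgradf X) (hasGradAt_pen β X)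
  rw [HasGradAt, dualCLM_add]
  exact h

lemma gradient_unique {n p : ℕ} {φ : Matrix (Fin n) (Fin p) ℝ → ℝ}
    {X G₁ G₂ : Matrix (Fin n) (Fin p) ℝ}
    (h₁ : HasGradAt φ X G₁) (h₂ : HasGradAt φ X G₂) : G₁ = G₂ := by
  have h : dualCLM G₁ = dualCLM G₂ := HasFDerivAt.unique h₁ h₂
  have happ : (G₁ᵀ * (G₁ - G₂)).trace = (G₂ᵀ * (G₁ - G₂)).trace := by
    have := ContinuousLinearMap.ext_iff.mp h (G₁ - G₂)
    simpa using this
  have h3 : ‖G₁ - G₂‖ ^ 2 = 0 := by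
    rw [sq_norm_eq, Matrix.transpose_sub, Matrix.sub_mul, Matrix.trace_sub, happ]
    ring
  have h4 : G₁ - G₂ = 0 := by
    rwa [pow_eq_zero_iff (two_ne_zero), norm_eq_zero] at h3
  exact sub_eq_zero.mp h4

theorem statement_2 {n p : ℕ} (f : Matrix (Fin n) (Fin p) ℝ → ℝ) (β : ℝ)
    (gradf : Matrix (Fin n) (Fin p) ℝ → Matrix (Fin n) (Fin p) ℝ)
    (hgradf : ∀ Y, HasGradAt f Y (gradf Y))
    (Hf : Matrix (Fin n) (Fin p) ℝ → Matrix (Fin n) (Fin p) ℝ →L[ℝ] Matrix (Fin n) (Fin p) ℝ)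
    (hHf : ∀ Y, HasFDerivAt gradf (Hf Y) Y)
    (hHfCont : Continuous Hf)
    (gradh : Matrix (Fin n) (Fin p) ℝ → Matrix (Fin n) (Fin p) ℝ)
    (hgradh : ∀ Y, HasGradAt (hpen f β) Y (gradh Y))
    (X : Matrix (Fin n) (Fin p) ℝ) :
    ∃ Hh : Matrix (Fin n) (Fin p) ℝ →L[ℝ] Matrix (Fin n) (Fin p) ℝ,
      HasFDerivAt gradh Hh X ∧
      ∀ D,
        Hh D =
          ((Hf (X * Amap X) (D * Amap X - X * Phi (Dᵀ * X))) * Amap X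
              - X * Phi ((Hf (X * Amap X) (D * Amap X - X * Phi (Dᵀ * X)))ᵀ * X))
            - D * Phi (Xᵀ * gradf (X * Amap X))
            - X * Phi (Dᵀ * gradf (X * Amap X))
            - gradf (X * Amap X) * Phi (Dᵀ * X)
            + β • ((2 : ℝ) • (X * Phi (Xᵀ * D)) + D * (Xᵀ * X - 1)) := by
  classical
  -- the explicit formula for the gradient of hpen
  set F : Matrix (Fin n) (Fin p) ℝ → Matrix (Fin n) (Fin p) ℝ := fun Y =>
    gradf (Y * Amap Y) * Amap Y - Y * Phi (Yᵀ * gradf (Y * Amap Y))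
      + β • (Y * (Yᵀ * Y - 1)) with hF
  have hgradh_eq : gradh = F := by
    funext Y
    exact gradient_unique (hgradh Y) (hasGradAt_hpen f β gradf hgradf Y)
  -- derivative of Y ↦ gradf (Y * Amap Y)
  have hGf : ∀ Y, HasFDerivAt (fun Z => gradf (Z * Amap Z))
      (Hf (Y * Amap Y) ∘L Jc Y) Y := fun Y =>
    (hHf (Y * Amap Y)).comp Y (hasFDerivAt_XAmap Y)
  -- derivative of the three pieces of F at X
  have hT1 : HasFDerivAt (fun Y => gradf (Y * Amap Y) * Amap Y)
      (mulL (gradf (X * Amap X)) ∘L (-(1 / 2 : ℝ) • tmulD X)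
        + mulR (Amap X) ∘L (Hf (X * Amap X) ∘L Jc X)) X :=
    HasFDerivAt.matmul (hGf X) (hasFDerivAt_Amap X)
  have hC2 : HasFDerivAt (fun Y : Matrix (Fin n) (Fin p) ℝ => Yᵀ * gradf (Y * Amap Y))
      (mulL Xᵀ ∘L (Hf (X * Amap X) ∘L Jc X)
        + mulR (gradf (X * Amap X)) ∘L transposeCLM n p) X := by
    have h := HasFDerivAt.matmul (u := fun Y : Matrix (Fin n) (Fin p) ℝ => Yᵀ)
      (v := fun Y => gradf (Y * Amap Y)) ((transposeCLM n p).hasFDerivAt) (hGf X)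
    exact h
  have hPhiC2 : HasFDerivAt (fun Y : Matrix (Fin n) (Fin p) ℝ => Phi (Yᵀ * gradf (Y * Amap Y)))
      (phiCLM p ∘L (mulL Xᵀ ∘L (Hf (X * Amap X) ∘L Jc X)
        + mulR (gradf (X * Amap X)) ∘L transposeCLM n p)) X :=
    ((phiCLM p).hasFDerivAt).comp X hC2
  have hT2 : HasFDerivAt (fun Y : Matrix (Fin n) (Fin p) ℝ => Y * Phi (Yᵀ * gradf (Y * Amap Y)))
      (mulL X ∘L (phiCLM p ∘L (mulL Xᵀ ∘L (Hf (X * Amap X) ∘L Jc X)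
          + mulR (gradf (X * Amap X)) ∘L transposeCLM n p))
        + mulR (Phi (Xᵀ * gradf (X * Amap X))) ∘L ContinuousLinearMap.id ℝ _) X :=
    HasFDerivAt.matmul (u := fun Y : Matrix (Fin n) (Fin p) ℝ => Y) (hasFDerivAt_id X) hPhiC2
  have hT3pre : HasFDerivAt (fun Y : Matrix (Fin n) (Fin p) ℝ => Y * (Yᵀ * Y - 1))
      (mulL X ∘L tmulD X + mulR (Xᵀ * X - 1) ∘L ContinuousLinearMap.id ℝ _) X :=
    HasFDerivAt.matmul (u := fun Y : Matrix (Fin n) (Fin p) ℝ => Y) (hasFDerivAt_id X)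
      ((hasFDerivAt_tmul X).sub_const 1)
  have hT3 : HasFDerivAt (fun Y : Matrix (Fin n) (Fin p) ℝ => β • (Y * (Yᵀ * Y - 1)))
      (β • (mulL X ∘L tmulD X + mulR (Xᵀ * X - 1) ∘L ContinuousLinearMap.id ℝ _)) X :=
    hT3pre.const_smul β
  have hbig := (hT1.sub hT2).add hT3
  replace hbig : HasFDerivAt F _ X := hbig
  rw [hgradh_eq]
  refine ⟨_, hbig, ?_⟩
  intro D
  show gradf (X * Amap X) * (-(1 / 2 : ℝ) • (Dᵀ * X + Xᵀ * D))
      + Hf (X * Amap X) (Jc X D) * Amap X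
      - (X * Phi (Xᵀ * Hf (X * Amap X) (Jc X D) + Dᵀ * gradf (X * Amap X))
        + D * Phi (Xᵀ * gradf (X * Amap X)))
      + β • (X * (Dᵀ * X + Xᵀ * D) + D * (Xᵀ * X - 1)) = _
  simp only [ContinuousLinearMap.add_apply, ContinuousLinearMap.sub_apply,
    ContinuousLinearMap.comp_apply, ContinuousLinearMap.smul_apply,
    ContinuousLinearMap.neg_apply, ContinuousLinearMap.coe_smul', Pi.smul_apply,
    ContinuousLinearMap.id_apply, mulL_apply, mulR_apply, transposeCLM_apply, phiCLM_apply,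
    tmulD_apply, Jc_apply, Phi, Matrix.transpose_add, Matrix.transpose_sub,
    Matrix.transpose_smul, Matrix.transpose_mul, Matrix.transpose_transpose, Amap_transpose,
    Matrix.mul_add, Matrix.add_mul, Matrix.mul_sub, Matrix.sub_mul, Matrix.smul_mul,
    Matrix.mul_smul, Matrix.mul_assoc, smul_add, smul_sub, smul_smul, Matrix.mul_one,
    Matrix.one_mul]
  module

end ExPen
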